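/- If T ∈ ℝ^{R×R} is a quasi-permutation matrix and P is a 3-way core whose 1-unfolding has the block structure where each row-slice is supported on a diagonal pattern (i.e., spl₁(P) has the form [X₁E | X₂E | ⋯] with each block diagonal times a basis pattern as arising from the fiber-based TT construction), then the 2-unfolding of the core Ṗ defined by spl₁(Ṗ) = T·spl₁(P) is again a quasi-permutation matrix. -/
import Mathlib


open Matrix

/-- A matrix is a quasi-permutation matrix if each of its columns is a standard
basis vector. -/
def IsQuasiPerm {I J : Type*} [DecidableEq I] (M : Matrix I J ℝ) : Prop :=
  ∀ j, ∃ i₀, ∀ i, M i j = if i = i₀ then 1 else 0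

/-- In the fiber-based TT construction, a core
`P ∈ {0,1}^{R×n×R}` (given by its slices `P i`, `i < n`) has diagonal slices and,
for every `j`, the diagonal vector `i ↦ P i j j` is a standard basis vector of
`ℝⁿ`.  If `T ∈ ℝ^{R×R}` is a quasi-permutation matrix, then the 2-unfolding of
the core `Ṗ` defined by `spl₁(Ṗ) = T·spl₁(P)` (slice-wise, `Ṗ i = T * P i`)
is again a quasi-permutation matrix. -/
theorem transfer_preserves_quasi_perm_unfolding
    (R nmode : ℕ)
    (P : Fin nmode → Matrix (Fin R) (Fin R) ℝ)
    -- each slice of P is diagonal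
    (hdiag : ∀ i a b, a ≠ b → P i a b = 0)
    -- the diagonal of P along the mode index is a standard basis vector
    (hbasis : ∀ j : Fin R, ∃ i₀, ∀ i, P i j j = if i = i₀ then (1 : ℝ) else 0)
    (T : Matrix (Fin R) (Fin R) ℝ) (hT : IsQuasiPerm T) :
    -- the 2-unfolding of Ṗ, the (R·n)×R matrix with rows (a, i) and entries (T * P i) a b
    IsQuasiPerm (Matrix.of fun ai : Fin R × Fin nmode => fun b : Fin R =>
      (T * P ai.2) ai.1 b) := by
  intro b
  obtain ⟨i₀, hi⟩ := hbasis b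
  obtain ⟨a₀, ha⟩ := hT b
  refine ⟨(a₀, i₀), ?_⟩
  rintro ⟨a, i⟩
  have hmul : (T * P i) a b = T a b * P i b b := by
    rw [Matrix.mul_apply]
    rw [Finset.sum_eq_single b]
    · intro k _ hk
      rw [hdiag i k b hk, mul_zero]
    · intro h; exact absurd (Finset.mem_univ b) h
  simp only [Matrix.of_apply, hmul, ha, hi]
  by_cases h1 : a = a₀ <;> by_cases h2 : i = i₀ <;>
    simp [h1, h2, Prod.ext_iff]
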